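/- arXiv:2604.11450 — 3 statements merged into one kernel-verified Lean document; each statement's English description precedes it below -/
import Mathlib

section
/- If a sequence (w^k) in R^n is Féjer monotone with respect to a nonempty closed set M and converges to a point w̄ ∈ M, then for every k, ‖w^k − w̄‖ ≤ 2·dist(w^k, M). -/
theorem stmt_0 {n : ℕ} (w : ℕ → EuclideanSpace ℝ (Fin n))
    (M : Set (EuclideanSpace ℝ (Fin n))) (hM : M.Nonempty) (hMc : IsClosed M)
    (hFejer : ∀ s ∈ M, ∀ k : ℕ, ‖w (k + 1) - s‖ ≤ ‖w k - s‖)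
    (wbar : EuclideanSpace ℝ (Fin n)) (hwbar : wbar ∈ M)
    (hconv : Filter.Tendsto w Filter.atTop (nhds wbar)) :
    ∀ k : ℕ, ‖w k - wbar‖ ≤ 2 * Metric.infDist (w k) M := by
  intro k
  have key : ∀ s ∈ M, ‖wbar - s‖ ≤ ‖w k - s‖ := by
    intro s hs
    have mono : ∀ j, k ≤ j → ‖w j - s‖ ≤ ‖w k - s‖ := by
      intro j hj
      induction j with
      | zero => simp [Nat.le_zero.mp hj]
      | succ m ih =>
        rcases Nat.lt_or_ge k (m + 1) with h | h
        · exact (hFejer s hs m).trans (ih (Nat.lt_succ_iff.mp h))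
        · have : k = m + 1 := le_antisymm hj h
          simp [this]
    have htend : Filter.Tendsto (fun j => ‖w j - s‖) Filter.atTop (nhds ‖wbar - s‖) :=
      ((hconv.sub tendsto_const_nhds).norm)
    exact le_of_tendsto htend (Filter.eventually_atTop.mpr ⟨k, mono⟩)
  have h2 : ‖w k - wbar‖ / 2 ≤ Metric.infDist (w k) M := by
    by_contra hcon
    rw [not_le] at hcon
    obtain ⟨s, hs, hds⟩ := (Metric.infDist_lt_iff hM).mp hcon
    rw [dist_eq_norm] at hds
    have tri : ‖w k - wbar‖ ≤ ‖w k - s‖ + ‖wbar - s‖ := by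
      have h1 : w k - wbar = (w k - s) - (wbar - s) := by abel
      rw [h1]
      exact norm_sub_le _ _
    linarith [key s hs]  -- dummy
  linarith
end

section
/- Let C ⊂ R^n be the closed Euclidean ball of radius r > 0 centered at z_0, let p ∈ ∂C, and let H be the tangent hyperplane to C at p (i.e., H = {w : ⟨w − p, p − z_0⟩ = 0}). Then for every w ∈ H, dist(w, C) ≤ (1/r)‖w − p‖². -/
open RealInnerProductSpace

theorem stmt_13 {n : ℕ} (z₀ p : EuclideanSpace ℝ (Fin n)) (r : ℝ) (hr : 0 < r)
    (C : Set (EuclideanSpace ℝ (Fin n))) (hC : C = Metric.closedBall z₀ r)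
    (hp : dist p z₀ = r) :
    ∀ w : EuclideanSpace ℝ (Fin n), ⟪w - p, p - z₀⟫ = 0 →
      Metric.infDist w C ≤ (1 / r) * ‖w - p‖ ^ 2 := by
  intro w hw
  have hpC : p ∈ C := by
    rw [hC, Metric.mem_closedBall]; exact le_of_eq hp
  set d : ℝ := dist w z₀ with hd
  -- Pythagoras: d^2 = ‖w - p‖^2 + r^2
  have hpyth : d ^ 2 = ‖w - p‖ ^ 2 + r ^ 2 := by
    have : w - z₀ = (w - p) + (p - z₀) := by abel
    have h2 : ‖w - z₀‖ ^ 2 = ‖w - p‖ ^ 2 + ‖p - z₀‖ ^ 2 := by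
      rw [this, norm_add_sq_real, hw]; ring
    have h3 : ‖p - z₀‖ = r := by rw [← dist_eq_norm]; exact hp
    rw [hd, dist_eq_norm, h2, h3]
  by_cases hdr : d ≤ r
  · have : w ∈ C := by rw [hC, Metric.mem_closedBall]; exact hdr
    rw [Metric.infDist_zero_of_mem this]
    positivity
  push_neg at hdr
  have hd0 : 0 < d := lt_trans hr hdr
  -- the point q on the sphere between z₀ and w
  set q : EuclideanSpace ℝ (Fin n) := z₀ + (r / d) • (w - z₀) with hq
  have hqC : q ∈ C := by
    rw [hC, Metric.mem_closedBall, dist_eq_norm]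
    have : q - z₀ = (r / d) • (w - z₀) := by rw [hq]; abel
    have hnz : ‖w - z₀‖ = d := by rw [← dist_eq_norm]
    rw [this, norm_smul, hnz, Real.norm_eq_abs,
      abs_of_pos (div_pos hr hd0), div_mul_cancel₀ _ (ne_of_gt hd0)]
  have hwq : dist w q = d - r := by
    have : w - q = (1 - r / d) • (w - z₀) := by
      rw [hq, sub_smul, one_smul]; abel
    have hnz : ‖w - z₀‖ = d := by rw [← dist_eq_norm]
    rw [dist_eq_norm, this, norm_smul, hnz, Real.norm_eq_abs,
      abs_of_pos (by rw [sub_pos]; exact (div_lt_one hd0).mpr hdr)]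
    field_simp
  have h1 : Metric.infDist w C ≤ d - r := by
    rw [← hwq]; exact Metric.infDist_le_dist_of_mem hqC
  refine h1.trans ?_
  rw [div_mul_eq_mul_div, le_div_iff₀ hr]
  nlinarith [hpyth, hdr, hr]
end

section
/- Let α ≥ 2 and let u(x) denote the x-coordinate of the projection of (x, 0) onto X = {(x,y) : y ≥ x^α} for small x > 0, characterized by the normal equation x = u(1 + α·u^{2(α−1)}) with 0 < u < x. Then u(x) = x − α·x^{2α−1} + O(x^{4α−3}) as x → 0⁺. -/
open Filter Asymptotics

theorem stmt_18 (α : ℝ) (hα : 2 ≤ α) (u : ℝ → ℝ)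
    (hu : ∀ᶠ x in nhdsWithin 0 (Set.Ioi 0),
      0 < u x ∧ u x < x ∧ x = u x * (1 + α * u x ^ (2 * (α - 1)))) :
    (fun x => u x - (x - α * x ^ (2 * α - 1)))
      =O[nhdsWithin 0 (Set.Ioi 0)] fun x => x ^ (4 * α - 3) := by
  rw [isBigO_iff]
  refine ⟨α * ((2 * α - 1) * α), ?_⟩
  filter_upwards [hu, self_mem_nhdsWithin] with x hx hx0
  obtain ⟨hu0, hux, heq⟩ := hx
  have hx0 : (0:ℝ) < x := hx0
  set p : ℝ := 2 * α - 1 with hp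
  have hp1 : (1:ℝ) ≤ p := by rw [hp]; linarith
  have key : u x ^ (2 * (α - 1)) * u x = u x ^ p := by
    calc u x ^ (2 * (α - 1)) * u x
        = u x ^ (2 * (α - 1)) * u x ^ (1:ℝ) := by rw [Real.rpow_one]
      _ = u x ^ (2 * (α - 1) + 1) := (Real.rpow_add hu0 _ _).symm
      _ = u x ^ p := by rw [hp]; ring_nf
  have hxu : x - u x = α * u x ^ p := by
    rw [← key]; linear_combination heq
  have hup : (0:ℝ) < u x ^ p := Real.rpow_pos_of_pos hu0 p
  have huxp : u x ^ p ≤ x ^ p :=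
    Real.rpow_le_rpow hu0.le hux.le (by linarith)
  have hxp1 : (0:ℝ) ≤ x ^ (p - 1) := (Real.rpow_pos_of_pos hx0 _).le
  have hmvt : ‖x ^ p - u x ^ p‖ ≤ p * x ^ (p - 1) * ‖x - u x‖ := by
    have hconv : Convex ℝ (Set.Icc (u x) x) := convex_Icc _ _
    exact hconv.norm_image_sub_le_of_norm_hasDerivWithin_le
      (f := fun t : ℝ => t ^ p) (f' := fun t : ℝ => p * t ^ (p - 1))
      (fun t ht => (Real.hasDerivAt_rpow_const (Or.inr hp1)).hasDerivWithinAt)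
      (fun t ht => by
        have ht0 : 0 < t := lt_of_lt_of_le hu0 ht.1
        have : t ^ (p - 1) ≤ x ^ (p - 1) :=
          Real.rpow_le_rpow ht0.le ht.2 (by linarith)
        have hnn : (0:ℝ) ≤ p * t ^ (p - 1) :=
          mul_nonneg (by linarith) (Real.rpow_pos_of_pos ht0 _).le
        rw [Real.norm_eq_abs, abs_of_nonneg hnn]
        nlinarith)
      ⟨le_refl _, hux.le⟩ ⟨hux.le, le_refl _⟩
  have hrw : u x - (x - α * x ^ p) = α * (x ^ p - u x ^ p) := by
    linear_combination -hxu
  have hnorm : ‖x - u x‖ = α * u x ^ p := by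
    rw [Real.norm_eq_abs, abs_of_nonneg (by linarith)]; exact hxu
  have hsum : x ^ (p - 1) * x ^ p = x ^ (4 * α - 3) := by
    rw [← Real.rpow_add hx0]; congr 1; rw [hp]; ring
  rw [hrw, Real.norm_eq_abs, abs_mul, abs_of_nonneg (by linarith : (0:ℝ) ≤ α),
    Real.norm_eq_abs, abs_of_nonneg (Real.rpow_pos_of_pos hx0 _).le]
  calc α * |x ^ p - u x ^ p| ≤ α * (p * x ^ (p - 1) * (α * u x ^ p)) := by
        rw [hnorm] at hmvt
        exact mul_le_mul_of_nonneg_left (by simpa using hmvt) (by linarith)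
    _ ≤ α * (p * x ^ (p - 1) * (α * x ^ p)) := by
        have : p * x ^ (p - 1) * (α * u x ^ p) ≤ p * x ^ (p - 1) * (α * x ^ p) := by
          apply mul_le_mul_of_nonneg_left (by nlinarith)
          exact mul_nonneg (by linarith) hxp1
        exact mul_le_mul_of_nonneg_left this (by linarith)
    _ = α * (p * α) * (x ^ (p - 1) * x ^ p) := by ring
    _ = α * (p * α) * x ^ (4 * α - 3) := by rw [hsum]
end
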